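/- arXiv:2009.11822 — 3 statements merged into one kernel-verified Lean document; each statement's English description precedes it below -/
import Mathlib

section
/- Let z₀ ∈ ℂ, r₀ > 0, and let W, c₃, c₄ ∈ ℂ with c₃ ≠ 0. Suppose η and Ω are holomorphic on the open ball B(z₀, r₀) and that η(x) = W + c₃(x − z₀)³ + c₄(x − z₀)⁴ + (x − z₀)⁵ · R(x) for all x ∈ B(z₀, r₀), where R is holomorphic on B(z₀, r₀). Then there exists r₁ ∈ (0, r₀] such that for every r with 0 < r < r₁ the derivative η′ is nonvanishing on the circle {x : |x − z₀| = r} and (2πi)⁻¹ · ∮_{|x−z₀|=r} Ω(x)/η′(x) dx = Ω′(z₀)/(3c₃) − 4c₄·Ω(z₀)/(9c₃²). -/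
open Complex Metric

/-- Residue computation behind `∫_C dη^e = 2πi(Ω'(z)/(3α³) − 4β⁴Ω(z)/(9α⁶))`:
if `η(x) = W + c₃(x−z₀)³ + c₄(x−z₀)⁴ + O((x−z₀)⁵)` with `c₃ ≠ 0` and `Ω` is
holomorphic near `z₀`, then for all small circles around `z₀` the derivative `η'`
does not vanish on the circle and
`(2πi)⁻¹ ∮ Ω(x)/η'(x) dx = Ω'(z₀)/(3c₃) − 4c₄Ω(z₀)/(9c₃²)`. -/
theorem circleIntegral_div_deriv_cubic_expansion
    (z₀ : ℂ) (r₀ : ℝ) (hr₀ : 0 < r₀) (W c₃ c₄ : ℂ) (hc₃ : c₃ ≠ 0)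
    (η Ω R : ℂ → ℂ)
    (hη : DifferentiableOn ℂ η (ball z₀ r₀))
    (hΩ : DifferentiableOn ℂ Ω (ball z₀ r₀))
    (hR : DifferentiableOn ℂ R (ball z₀ r₀))
    (hexp : ∀ x ∈ ball z₀ r₀,
      η x = W + c₃ * (x - z₀) ^ 3 + c₄ * (x - z₀) ^ 4 + (x - z₀) ^ 5 * R x) :
    ∃ r₁ ∈ Set.Ioc (0 : ℝ) r₀, ∀ r : ℝ, 0 < r → r < r₁ →
      (∀ x ∈ sphere z₀ r, deriv η x ≠ 0) ∧
      (2 * Real.pi * Complex.I)⁻¹ * (∮ x in C(z₀, r), Ω x / deriv η x) =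
        deriv Ω z₀ / (3 * c₃) - 4 * c₄ * Ω z₀ / (9 * c₃ ^ 2) := by
  -- derivative of the remainder
  have hR' : DifferentiableOn ℂ (deriv R) (ball z₀ r₀) :=
    ((hR.analyticOnNhd isOpen_ball).deriv).differentiableOn
  set g : ℂ → ℂ := fun x =>
    3 * c₃ + 4 * c₄ * (x - z₀) + 5 * (x - z₀) ^ 2 * R x + (x - z₀) ^ 3 * deriv R x with hg_def
  have hgdiff : DifferentiableOn ℂ g (ball z₀ r₀) := by
    apply DifferentiableOn.add
    apply DifferentiableOn.add
    apply DifferentiableOn.add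
    · exact differentiableOn_const _
    · exact (differentiableOn_const _).mul ((differentiableOn_id.sub (differentiableOn_const _)))
    · exact ((differentiableOn_const _).mul
        (((differentiableOn_id.sub (differentiableOn_const _))).pow 2)).mul hR
    · exact (((differentiableOn_id.sub (differentiableOn_const _))).pow 3).mul hR'
  -- the derivative of η factors
  have key : ∀ x ∈ ball z₀ r₀, HasDerivAt η ((x - z₀) ^ 2 * g x) x := by
    intro x hx
    have hRx : HasDerivAt R (deriv R x) x :=
      (hR.differentiableAt (isOpen_ball.mem_nhds hx)).hasDerivAt
    have h1 : HasDerivAt (fun y : ℂ => y - z₀) 1 x := (hasDerivAt_id x).sub_const z₀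
    have h3 : HasDerivAt (fun y : ℂ => (y - z₀) ^ 3) (3 * (x - z₀) ^ 2) x := by
      simpa using (h1.fun_pow 3)
    have h4 : HasDerivAt (fun y : ℂ => (y - z₀) ^ 4) (4 * (x - z₀) ^ 3) x := by
      simpa using (h1.fun_pow 4)
    have h5 : HasDerivAt (fun y : ℂ => (y - z₀) ^ 5) (5 * (x - z₀) ^ 4) x := by
      simpa using (h1.fun_pow 5)
    have hF : HasDerivAt (fun y : ℂ =>
        W + c₃ * (y - z₀) ^ 3 + c₄ * (y - z₀) ^ 4 + (y - z₀) ^ 5 * R y)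
        (c₃ * (3 * (x - z₀) ^ 2) + c₄ * (4 * (x - z₀) ^ 3)
          + (5 * (x - z₀) ^ 4 * R x + (x - z₀) ^ 5 * deriv R x)) x := by
      have := (((h3.const_mul c₃).const_add W).fun_add (h4.const_mul c₄)).fun_add (h5.fun_mul hRx)
      simpa [mul_comm] using this
    have hEq : η =ᶠ[nhds x] fun y =>
        W + c₃ * (y - z₀) ^ 3 + c₄ * (y - z₀) ^ 4 + (y - z₀) ^ 5 * R y := by
      filter_upwards [isOpen_ball.mem_nhds hx] with y hy using hexp y hy
    have := hF.congr_of_eventuallyEq hEq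
    refine this.congr_deriv ?_
    simp only [hg_def]
    ring
  -- g is nonzero near z₀
  have hgz₀ : g z₀ = 3 * c₃ := by simp [hg_def]
  have hg3 : g z₀ ≠ 0 := by
    rw [hgz₀]; exact mul_ne_zero (by norm_num) hc₃
  have hgc : ContinuousAt g z₀ :=
    (hgdiff.differentiableAt (isOpen_ball.mem_nhds (mem_ball_self hr₀))).continuousAt
  have hne : ∀ᶠ x in nhds z₀, g x ≠ 0 := hgc.eventually_ne hg3
  obtain ⟨ε, hε, hball⟩ := Metric.eventually_nhds_iff_ball.mp hne
  refine ⟨min ε r₀, ⟨lt_min hε hr₀, min_le_right _ _⟩, fun r hr hrlt => ?_⟩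
  have hsub : ball z₀ (min ε r₀) ⊆ ball z₀ r₀ := ball_subset_ball (min_le_right _ _)
  have hsubε : ball z₀ (min ε r₀) ⊆ ball z₀ ε := ball_subset_ball (min_le_left _ _)
  have hsphere : sphere z₀ r ⊆ ball z₀ (min ε r₀) := sphere_subset_closedBall.trans
    (closedBall_subset_ball hrlt)
  have hderiv_ne : ∀ x ∈ sphere z₀ r, deriv η x ≠ 0 := by
    intro x hx
    have hx0 : x ∈ ball z₀ r₀ := hsub (hsphere hx)
    rw [(key x hx0).deriv]
    have hxz : x ≠ z₀ := by
      rintro rfl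
      rw [mem_sphere, dist_self] at hx
      exact hr.ne hx
    exact mul_ne_zero (pow_ne_zero _ (sub_ne_zero.mpr hxz)) (hball _ (hsubε (hsphere hx)))
  refine ⟨hderiv_ne, ?_⟩
  -- the holomorphic quotient h = Ω / g
  set h : ℂ → ℂ := fun x => Ω x / g x with hh_def
  have hhdiff : DifferentiableOn ℂ h (ball z₀ (min ε r₀)) := by
    apply DifferentiableOn.div (hΩ.mono hsub) (hgdiff.mono hsub)
    intro x hx; exact hball _ (hsubε hx)
  -- power series of h on ball z₀ r
  set r' : NNReal := ⟨r, hr.le⟩ with hr'_def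
  have hr'r : (r' : ℝ) = r := rfl
  have hrpos : (0 : NNReal) < r' := by
    rw [← NNReal.coe_lt_coe, hr'r]; exact hr
  have hps : HasFPowerSeriesOnBall h (cauchyPowerSeries h z₀ r') z₀ r' := by
    refine DifferentiableOn.hasFPowerSeriesOnBall ?_ hrpos
    refine hhdiff.mono ?_
    rw [hr'r]
    exact closedBall_subset_ball hrlt
  have hderivh : deriv h z₀ = (cauchyPowerSeries h z₀ r').coeff 1 :=
    hps.hasFPowerSeriesAt.deriv
  -- coefficient 1 of the Cauchy power series
  have hcoeff : (cauchyPowerSeries h z₀ r').coeff 1 =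
      (2 * Real.pi * Complex.I)⁻¹ * ∮ x in C(z₀, r), Ω x / deriv η x := by
    have happ : (cauchyPowerSeries h z₀ r').coeff 1 =
        (2 * Real.pi * Complex.I : ℂ)⁻¹ • ∮ x in C(z₀, (r' : ℝ)),
          ((1 : ℂ) / (x - z₀)) ^ 1 • (x - z₀)⁻¹ • h x :=
      cauchyPowerSeries_apply h z₀ r' 1 1
    rw [happ, smul_eq_mul, hr'r]
    congr 1
    refine circleIntegral.integral_congr hr.le fun x hx => ?_
    have hx0 : x ∈ ball z₀ r₀ := hsub (hsphere hx)
    have hxz : x ≠ z₀ := by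
      rintro rfl
      rw [mem_sphere, dist_self] at hx
      exact hr.ne hx
    have hwz : x - z₀ ≠ 0 := sub_ne_zero.mpr hxz
    have hgx : g x ≠ 0 := hball _ (hsubε (hsphere hx))
    rw [(key x hx0).deriv]
    simp only [hh_def, smul_eq_mul]
    field_simp
  -- derivative of g at z₀
  have hRz : HasDerivAt R (deriv R z₀) z₀ :=
    (hR.differentiableAt (isOpen_ball.mem_nhds (mem_ball_self hr₀))).hasDerivAt
  have hR'z : HasDerivAt (deriv R) (deriv (deriv R) z₀) z₀ :=
    (hR'.differentiableAt (isOpen_ball.mem_nhds (mem_ball_self hr₀))).hasDerivAt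
  have h1 : HasDerivAt (fun y : ℂ => y - z₀) 1 z₀ := (hasDerivAt_id z₀).sub_const z₀
  have h2 : HasDerivAt (fun y : ℂ => (y - z₀) ^ 2) (2 * (z₀ - z₀) ^ 1) z₀ := by
    simpa using (h1.fun_pow 2)
  have h3 : HasDerivAt (fun y : ℂ => (y - z₀) ^ 3) (3 * (z₀ - z₀) ^ 2) z₀ := by
    simpa using (h1.fun_pow 3)
  have hgz : HasDerivAt g (4 * c₄) z₀ := by
    have := ((((h1.const_mul (4 * c₄)).const_add (3 * c₃)).fun_add
      ((h2.const_mul 5).fun_mul hRz)).fun_add (h3.fun_mul hR'z))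
    refine this.congr_deriv ?_
    simp
  -- derivative of h at z₀
  have hΩz : HasDerivAt Ω (deriv Ω z₀) z₀ :=
    (hΩ.differentiableAt (isOpen_ball.mem_nhds (mem_ball_self hr₀))).hasDerivAt
  have hhz : deriv h z₀ = (deriv Ω z₀ * g z₀ - Ω z₀ * (4 * c₄)) / g z₀ ^ 2 :=
    (hΩz.div hgz hg3).deriv
  rw [← hcoeff, ← hderivh, hhz, hgz₀]
  field_simp
  ring
end

section
/- Let z₀ ∈ ℂ, r₀ > 0, W ∈ ℂ, and α ∈ ℂ with α ≠ 0. Suppose y and Ω are holomorphic on the open ball B(z₀, r₀), with y(z₀) = 0 and y′(z₀) = α, and define η(x) := W + y(x)³. Then there exists r₁ ∈ (0, r₀] such that for every r with 0 < r < r₁ the derivative η′ is nonvanishing on the circle {x : |x − z₀| = r} and (2πi)⁻¹ · ∮_{|x−z₀|=r} y(x)·Ω(x)/η′(x) dx = Ω(z₀)/(3α²). -/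
open Complex Metric

/-- Residue computation behind `∫_C y(x) dη^e = 2πi·Ω(z)/(3α²)`:
if `y` is holomorphic near `z₀` with `y(z₀) = 0`, `y'(z₀) = α ≠ 0`, and
`η(x) := W + y(x)³`, then for all small circles around `z₀` the derivative `η'`
does not vanish on the circle and
`(2πi)⁻¹ ∮ y(x)Ω(x)/η'(x) dx = Ω(z₀)/(3α²)`. -/
theorem circleIntegral_y_div_deriv_cube
    (z₀ : ℂ) (r₀ : ℝ) (hr₀ : 0 < r₀) (W α : ℂ) (hα : α ≠ 0)
    (y Ω : ℂ → ℂ)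
    (hy : DifferentiableOn ℂ y (ball z₀ r₀))
    (hΩ : DifferentiableOn ℂ Ω (ball z₀ r₀))
    (hy0 : y z₀ = 0) (hy' : deriv y z₀ = α) :
    ∃ r₁ ∈ Set.Ioc (0 : ℝ) r₀, ∀ r : ℝ, 0 < r → r < r₁ →
      (∀ x ∈ sphere z₀ r, deriv (fun x => W + y x ^ 3) x ≠ 0) ∧
      (2 * Real.pi * Complex.I)⁻¹ *
          (∮ x in C(z₀, r), y x * Ω x / deriv (fun x => W + y x ^ 3) x) =
        Ω z₀ / (3 * α ^ 2) := by
  have hz₀ : z₀ ∈ ball z₀ r₀ := mem_ball_self hr₀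
  set g : ℂ → ℂ := dslope y z₀ with hgdef
  have hg : DifferentiableOn ℂ g (ball z₀ r₀) :=
    (differentiableOn_dslope (isOpen_ball.mem_nhds hz₀)).mpr hy
  have hgz₀ : g z₀ = α := by simp [hgdef, dslope_same, hy']
  have hyg : ∀ x, y x = (x - z₀) * g x := by
    intro x
    have := sub_smul_dslope y z₀ x
    rw [hy0, sub_zero, smul_eq_mul] at this
    exact this.symm
  -- deriv y is differentiable on the ball
  have hdy : DifferentiableOn ℂ (deriv y) (ball z₀ r₀) :=
    ((hy.analyticOnNhd isOpen_ball).deriv).differentiableOn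
  -- continuity at z₀ of g and deriv y
  have hgc : ContinuousAt g z₀ :=
    (hg.differentiableAt (isOpen_ball.mem_nhds hz₀)).continuousAt
  have hdyc : ContinuousAt (deriv y) z₀ :=
    (hdy.differentiableAt (isOpen_ball.mem_nhds hz₀)).continuousAt
  have hU : ∀ᶠ x in nhds z₀, x ∈ ball z₀ r₀ ∧ g x ≠ 0 ∧ deriv y x ≠ 0 := by
    have h1 := isOpen_ball.eventually_mem hz₀
    have h2 : ∀ᶠ x in nhds z₀, g x ≠ 0 := hgc.eventually_ne (by rw [hgz₀]; exact hα)
    have h3 : ∀ᶠ x in nhds z₀, deriv y x ≠ 0 := hdyc.eventually_ne (by rw [hy']; exact hα)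
    filter_upwards [h1, h2, h3] with x hx1 hx2 hx3 using ⟨hx1, hx2, hx3⟩
  obtain ⟨ε, hε, hball⟩ := Metric.eventually_nhds_iff_ball.mp hU
  refine ⟨min ε r₀, ⟨lt_min hε hr₀, min_le_right _ _⟩, ?_⟩
  intro r hr hrlt
  have hrε : r < ε := hrlt.trans_le (min_le_left _ _)
  have hrr₀ : r < r₀ := hrlt.trans_le (min_le_right _ _)
  -- derivative of η
  have hderiv : ∀ x ∈ ball z₀ r₀,
      deriv (fun x => W + y x ^ 3) x = 3 * y x ^ 2 * deriv y x := by
    intro x hx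
    have h := (hy.differentiableAt (isOpen_ball.mem_nhds hx)).hasDerivAt
    have h2 := (h.pow 3).const_add W
    rw [show deriv (fun x => W + y x ^ 3) x = ↑3 * y x ^ (3 - 1) * deriv y x from h2.deriv]
  set f : ℂ → ℂ := fun x => Ω x / (3 * g x * deriv y x) with hfdef
  have hfd : DifferentiableOn ℂ f (ball z₀ (min ε r₀)) := by
    intro x hx
    have hxε : x ∈ ball z₀ ε := ball_subset_ball (min_le_left _ _) hx
    have hxr₀ : x ∈ ball z₀ r₀ := ball_subset_ball (min_le_right _ _) hx
    obtain ⟨-, hgx, hdyx⟩ := hball x hxε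
    have hden : (3 : ℂ) * g x * deriv y x ≠ 0 :=
      mul_ne_zero (mul_ne_zero three_ne_zero hgx) hdyx
    exact ((hΩ.differentiableAt (isOpen_ball.mem_nhds hxr₀)).div
      (((hg.differentiableAt (isOpen_ball.mem_nhds hxr₀)).const_mul 3).mul
        (hdy.differentiableAt (isOpen_ball.mem_nhds hxr₀))) hden).differentiableWithinAt
  have hsub : closedBall z₀ r ⊆ ball z₀ (min ε r₀) :=
    closedBall_subset_ball hrlt
  have hdc : DiffContOnCl ℂ f (ball z₀ r) :=
    ⟨hfd.mono (ball_subset_ball hrlt.le),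
      (hfd.mono ((closure_ball_subset_closedBall).trans hsub)).continuousOn⟩
  have hCauchy := hdc.circleIntegral_sub_inv_smul (mem_ball_self hr)
  -- facts on the sphere
  have hsph : ∀ x ∈ sphere z₀ r, x ∈ ball z₀ r₀ ∧ x ≠ z₀ ∧ g x ≠ 0 ∧ deriv y x ≠ 0 := by
    intro x hx
    have hxε : x ∈ ball z₀ ε := (sphere_subset_closedBall.trans
      (closedBall_subset_ball hrε)) hx
    obtain ⟨hx₀, hgx, hdyx⟩ := hball x hxε
    refine ⟨hx₀, ?_, hgx, hdyx⟩
    intro h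
    rw [mem_sphere, h, dist_self] at hx
    exact hr.ne hx
  constructor
  · intro x hx
    obtain ⟨hx₀, hxne, hgx, hdyx⟩ := hsph x hx
    rw [hderiv x hx₀, hyg x]
    exact mul_ne_zero (mul_ne_zero three_ne_zero
      (pow_ne_zero _ (mul_ne_zero (sub_ne_zero.mpr hxne) hgx))) hdyx
  · have heq : (∮ x in C(z₀, r), y x * Ω x / deriv (fun x => W + y x ^ 3) x)
        = ∮ x in C(z₀, r), (x - z₀)⁻¹ • f x := by
      refine circleIntegral.integral_congr hr.le ?_
      intro x hx
      obtain ⟨hx₀, hxne, hgx, hdyx⟩ := hsph x hx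
      have hxz : x - z₀ ≠ 0 := sub_ne_zero.mpr hxne
      show y x * Ω x / deriv (fun x => W + y x ^ 3) x = (x - z₀)⁻¹ • f x
      rw [hderiv x hx₀, hyg x]
      simp only [smul_eq_mul, hfdef]
      field_simp
    rw [heq, hCauchy, smul_eq_mul]
    have h2pi : (2 * ↑Real.pi * I : ℂ) ≠ 0 := by
      simp [Real.pi_ne_zero, I_ne_zero]
    rw [inv_mul_cancel_left₀ h2pi]
    simp only [hfdef, hgz₀, hy']
    ring
end

section
/- Let U ⊆ ℂ be an open set and g : ℂ → ℂ be holomorphic on U (complex-differentiable at every point of U). Suppose that for every continuously differentiable loop γ : [0,1] → U with γ(0) = γ(1), the real part of ∫₀¹ g(γ(t))·γ′(t) dt vanishes. Then there exists a function u : ℂ → ℝ such that at every z ∈ U, u is (real) Fréchet differentiable with derivative the ℝ-linear map w ↦ Re(g(z)·w). -/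
open Complex Set intervalIntegral

noncomputable section

namespace RePrim

/-- smoothstep -/
def sm (t : ℝ) : ℝ := 3*t^2 - 2*t^3

lemma sm_contDiff : ContDiff ℝ 1 sm := by unfold sm; fun_prop

lemma sm_deriv (t : ℝ) : HasDerivAt sm (6*t - 6*t^2) t := by
  have h : HasDerivAt (fun y : ℝ => 3*y^2 - 2*y^3) _ t := ((hasDerivAt_pow 2 t).const_mul 3).sub ((hasDerivAt_pow 3 t).const_mul 2)
  refine h.congr_deriv ?_
  norm_num
  ring

lemma sm_zero : sm 0 = 0 := by norm_num [sm]
lemma sm_one : sm 1 = 1 := by norm_num [sm]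
lemma sm_mem {t : ℝ} (ht : t ∈ Icc (0:ℝ) 1) : sm t ∈ Icc (0:ℝ) 1 := by
  obtain ⟨h0, h1⟩ := ht
  unfold sm
  constructor
  · nlinarith [sq_nonneg t]
  · nlinarith [sq_nonneg (1-t)]

lemma udi : UniqueDiffOn ℝ (Icc (0:ℝ) 1) := uniqueDiffOn_Icc (by norm_num)

def PathOK (U : Set ℂ) (a b : ℂ) (γ : ℝ → ℂ) : Prop :=
  ContDiffOn ℝ 1 γ (Icc 0 1) ∧ (∀ t ∈ Icc (0:ℝ) 1, γ t ∈ U) ∧ γ 0 = a ∧ γ 1 = b ∧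
  derivWithin γ (Icc 0 1) 0 = 0 ∧ derivWithin γ (Icc 0 1) 1 = 0

def PI (g : ℂ → ℂ) (γ : ℝ → ℂ) : ℂ := ∫ t in (0:ℝ)..1, g (γ t) * derivWithin γ (Icc 0 1) t

variable {U : Set ℂ} {g : ℂ → ℂ}

lemma derivWithin_const' (a : ℂ) {t : ℝ} (ht : t ∈ Icc (0:ℝ) 1) :
    derivWithin (fun _ : ℝ => a) (Icc 0 1) t = 0 :=
  (hasDerivAt_const t a).hasDerivWithinAt.derivWithin (udi t ht)

lemma const_pathOK {a : ℂ} (ha : a ∈ U) : PathOK U a a (fun _ => a) :=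
  ⟨contDiffOn_const, fun t _ => ha, rfl, rfl,
    derivWithin_const' a (by norm_num), derivWithin_const' a (by norm_num)⟩

lemma const_PI (a : ℂ) : PI g (fun _ => a) = 0 := by
  have : ∀ t ∈ uIcc (0:ℝ) 1, g a * derivWithin (fun _ : ℝ => a) (Icc 0 1) t = 0 := by
    intro t ht
    rw [uIcc_of_le (by norm_num : (0:ℝ) ≤ 1)] at ht
    rw [derivWithin_const' a ht, mul_zero]
  simp only [PI]
  rw [intervalIntegral.integral_congr this]
  simp

/-- segment path -/
def seg (a b : ℂ) (t : ℝ) : ℂ := a + (sm t : ℂ) * (b - a)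

lemma seg_hasDerivAt (a b : ℂ) (t : ℝ) :
    HasDerivAt (seg a b) (((6*t - 6*t^2 : ℝ) : ℂ) * (b - a)) t :=
  (((sm_deriv t).ofReal_comp).mul_const (b - a)).const_add a

lemma seg_derivWithin (a b : ℂ) {t : ℝ} (ht : t ∈ Icc (0:ℝ) 1) :
    derivWithin (seg a b) (Icc 0 1) t = ((6*t - 6*t^2 : ℝ) : ℂ) * (b - a) :=
  ((seg_hasDerivAt a b t).hasDerivWithinAt).derivWithin (udi t ht)

lemma seg_pathOK {a b : ℂ} (h : ∀ t ∈ Icc (0:ℝ) 1, seg a b t ∈ U) :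
    PathOK U a b (seg a b) := by
  refine ⟨?_, h, ?_, ?_, ?_, ?_⟩
  · refine ContDiff.contDiffOn ?_
    exact contDiff_const.add ((Complex.ofRealCLM.contDiff.comp sm_contDiff).mul contDiff_const)
  · simp [seg, sm_zero]
  · simp [seg, sm_one]
  · rw [seg_derivWithin a b (by norm_num)]; norm_num
  · rw [seg_derivWithin a b (by norm_num)]; norm_num

lemma seg_PI (a b : ℂ) :
    PI g (seg a b) = ∫ t in (0:ℝ)..1, g (seg a b t) * (((6*t - 6*t^2 : ℝ):ℂ) * (b - a)) := by
  refine intervalIntegral.integral_congr fun t ht => ?_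
  rw [uIcc_of_le (by norm_num : (0:ℝ) ≤ 1)] at ht
  rw [seg_derivWithin a b ht]


/-- reversed path -/
def rev (γ : ℝ → ℂ) (t : ℝ) : ℂ := γ (1 - t)

lemma mem_rev {t : ℝ} (ht : t ∈ Icc (0:ℝ) 1) : 1 - t ∈ Icc (0:ℝ) 1 :=
  ⟨by linarith [ht.2], by linarith [ht.1]⟩

lemma rev_hasDerivWithinAt {γ : ℝ → ℂ} (hγ : ContDiffOn ℝ 1 γ (Icc 0 1)) {t : ℝ}
    (ht : t ∈ Icc (0:ℝ) 1) :
    HasDerivWithinAt (rev γ) (-(derivWithin γ (Icc 0 1) (1 - t))) (Icc 0 1) t := by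
  have h1 : HasDerivWithinAt γ (derivWithin γ (Icc 0 1) (1 - t)) (Icc 0 1) (1 - t) :=
    (hγ.differentiableOn one_ne_zero (1 - t) (mem_rev ht)).hasDerivWithinAt
  have h2 : HasDerivWithinAt (fun s : ℝ => 1 - s) (-1) (Icc 0 1) t := by
    exact ((hasDerivAt_const t (1:ℝ)).sub (hasDerivAt_id t)).hasDerivWithinAt.congr_deriv (by norm_num)
  have := HasDerivWithinAt.scomp t h1 h2 (fun s hs => mem_rev hs)
  exact this.congr_deriv (by simp)

lemma rev_derivWithin {γ : ℝ → ℂ} (hγ : ContDiffOn ℝ 1 γ (Icc 0 1)) {t : ℝ}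
    (ht : t ∈ Icc (0:ℝ) 1) :
    derivWithin (rev γ) (Icc 0 1) t = -(derivWithin γ (Icc 0 1) (1 - t)) :=
  (rev_hasDerivWithinAt hγ ht).derivWithin (udi t ht)

lemma rev_pathOK {a b : ℂ} {γ : ℝ → ℂ} (h : PathOK U a b γ) : PathOK U b a (rev γ) := by
  obtain ⟨hc, hm, h0, h1, hd0, hd1⟩ := h
  refine ⟨?_, fun t ht => hm _ (mem_rev ht), ?_, ?_, ?_, ?_⟩
  · exact hc.comp ((contDiff_const.sub contDiff_id).contDiffOn) (fun t ht => mem_rev ht)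
  · simpa [rev] using h1
  · simpa [rev] using h0
  · rw [rev_derivWithin hc (by norm_num)]; norm_num [hd1]
  · rw [rev_derivWithin hc (by norm_num)]; norm_num [hd0]

lemma rev_PI {γ : ℝ → ℂ} (hγ : ContDiffOn ℝ 1 γ (Icc 0 1)) : PI g (rev γ) = -PI g γ := by
  have hcg : ∀ t ∈ uIcc (0:ℝ) 1,
      g (rev γ t) * derivWithin (rev γ) (Icc 0 1) t
        = -(g (γ (1 - t)) * derivWithin γ (Icc 0 1) (1 - t)) := by
    intro t ht
    rw [uIcc_of_le (by norm_num : (0:ℝ) ≤ 1)] at ht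
    rw [rev_derivWithin hγ ht]
    simp [rev]
  simp only [PI]
  rw [intervalIntegral.integral_congr hcg, intervalIntegral.integral_neg]
  congr 1
  have := intervalIntegral.integral_comp_sub_left
    (fun s => g (γ s) * derivWithin γ (Icc 0 1) s) 1 (a := 0) (b := 1)
  simpa using this


/-- concatenation -/
def cat (γ₁ γ₂ : ℝ → ℂ) (t : ℝ) : ℂ := if t ≤ 1/2 then γ₁ (2*t) else γ₂ (2*t - 1)

/-- candidate derivative of the concatenation -/
def catd (γ₁ γ₂ : ℝ → ℂ) (t : ℝ) : ℂ :=
  if t ≤ 1/2 then (2:ℝ) • derivWithin γ₁ (Icc 0 1) (2*t)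
  else (2:ℝ) • derivWithin γ₂ (Icc 0 1) (2*t - 1)

lemma memL {t : ℝ} (h0 : 0 ≤ t) (h1 : t ≤ 1/2) : 2*t ∈ Icc (0:ℝ) 1 :=
  ⟨by linarith, by linarith⟩
lemma memR {t : ℝ} (h0 : 1/2 ≤ t) (h1 : t ≤ 1) : 2*t - 1 ∈ Icc (0:ℝ) 1 :=
  ⟨by linarith, by linarith⟩

lemma cat_eq_left {γ₁ γ₂ : ℝ → ℂ} {t : ℝ} (h : t ≤ 1/2) : cat γ₁ γ₂ t = γ₁ (2*t) := if_pos h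
lemma cat_eq_right {γ₁ γ₂ : ℝ → ℂ} {t : ℝ} (h : ¬ t ≤ 1/2) : cat γ₁ γ₂ t = γ₂ (2*t-1) := if_neg h
lemma catd_eq_left {γ₁ γ₂ : ℝ → ℂ} {t : ℝ} (h : t ≤ 1/2) :
    catd γ₁ γ₂ t = (2:ℝ) • derivWithin γ₁ (Icc 0 1) (2*t) := if_pos h
lemma catd_eq_right {γ₁ γ₂ : ℝ → ℂ} {t : ℝ} (h : ¬ t ≤ 1/2) :
    catd γ₁ γ₂ t = (2:ℝ) • derivWithin γ₂ (Icc 0 1) (2*t-1) := if_neg h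

section Cat

variable {a b c : ℂ} {γ₁ γ₂ : ℝ → ℂ}
  (h₁ : PathOK U a b γ₁) (h₂ : PathOK U b c γ₂)

include h₁ h₂

lemma cat_hasDerivL {t : ℝ} (ht : t ∈ Icc (0:ℝ) (1/2)) :
    HasDerivWithinAt (cat γ₁ γ₂) (catd γ₁ γ₂ t) (Icc 0 (1/2)) t := by
  have h2t : (2:ℝ)*t ∈ Icc (0:ℝ) 1 := memL ht.1 ht.2
  have hγ : HasDerivWithinAt γ₁ (derivWithin γ₁ (Icc 0 1) (2*t)) (Icc 0 1) (2*t) :=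
    (h₁.1.differentiableOn one_ne_zero _ h2t).hasDerivWithinAt
  have hin : HasDerivWithinAt (fun s : ℝ => 2*s) 2 (Icc 0 (1/2)) t := by
    simpa using ((hasDerivAt_id t).const_mul (2:ℝ)).hasDerivWithinAt
  have hcomp := HasDerivWithinAt.scomp t hγ hin (fun s hs => memL hs.1 hs.2)
  have heq : EqOn (cat γ₁ γ₂) (γ₁ ∘ fun s => 2*s) (Icc 0 (1/2)) := fun s hs =>
    cat_eq_left hs.2
  have hcomp2 : (γ₁ ∘ fun s => 2*s) = γ₁ ∘ (HMul.hMul 2) := rfl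
  rw [catd_eq_left ht.2]
  exact (hcomp2 ▸ hcomp).congr heq (heq ht)

lemma cat_hasDerivR {t : ℝ} (ht : t ∈ Icc (1/2:ℝ) 1) :
    HasDerivWithinAt (cat γ₁ γ₂) (catd γ₁ γ₂ t) (Icc (1/2) 1) t := by
  have h2t : 2*t - 1 ∈ Icc (0:ℝ) 1 := memR ht.1 ht.2
  have hγ : HasDerivWithinAt γ₂ (derivWithin γ₂ (Icc 0 1) (2*t-1)) (Icc 0 1) (2*t-1) :=
    (h₂.1.differentiableOn one_ne_zero _ h2t).hasDerivWithinAt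
  have hin : HasDerivWithinAt (fun s : ℝ => 2*s - 1) 2 (Icc (1/2) 1) t := by
    simpa using (((hasDerivAt_id t).const_mul (2:ℝ)).sub_const 1).hasDerivWithinAt
  have hcomp := HasDerivWithinAt.scomp t hγ hin (fun s hs => memR hs.1 hs.2)
  have heq : EqOn (cat γ₁ γ₂) (γ₂ ∘ fun s => 2*s - 1) (Icc (1/2) 1) := by
    intro s hs
    by_cases hs2 : s ≤ 1/2
    · have hs12 : s = 1/2 := le_antisymm hs2 hs.1
      subst hs12
      rw [cat_eq_left le_rfl, (by norm_num : (2:ℝ)*(1/2) = 1), h₁.2.2.2.1]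
      show b = γ₂ (2*(1/2:ℝ) - 1)
      rw [(by norm_num : (2:ℝ)*(1/2) - 1 = 0), h₂.2.2.1]
    · exact cat_eq_right hs2
  have hder := hcomp.congr heq (heq ht)
  by_cases ht2 : t ≤ 1/2
  · have ht12 : t = 1/2 := le_antisymm ht2 ht.1
    subst ht12
    have hz : derivWithin γ₂ (Icc 0 1) (2*(1/2:ℝ)-1) = 0 := by
      rw [(by norm_num : (2:ℝ)*(1/2) - 1 = 0)]; exact h₂.2.2.2.2.1
    have hz' : derivWithin γ₁ (Icc 0 1) (2*(1/2:ℝ)) = 0 := by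
      rw [(by norm_num : (2:ℝ)*(1/2) = 1)]; exact h₁.2.2.2.2.2
    rw [catd_eq_left le_rfl, hz']
    rw [hz, smul_zero] at hder
    rw [smul_zero]
    exact hder
  · rw [catd_eq_right ht2]
    exact hder

lemma cat_hasDeriv {t : ℝ} (ht : t ∈ Icc (0:ℝ) 1) :
    HasDerivWithinAt (cat γ₁ γ₂) (catd γ₁ γ₂ t) (Icc 0 1) t := by
  have hun : Icc (0:ℝ) (1/2) ∪ Icc (1/2) 1 = Icc 0 1 :=
    Icc_union_Icc_eq_Icc (by norm_num) (by norm_num)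
  rcases lt_trichotomy t (1/2) with h | h | h
  · refine (cat_hasDerivL h₁ h₂ ⟨ht.1, h.le⟩).mono_of_mem_nhdsWithin ?_
    refine mem_nhdsWithin.2 ⟨Iio (1/2), isOpen_Iio, h, ?_⟩
    rintro s ⟨hs1, hs2⟩
    exact ⟨hs2.1, hs1.le⟩
  · subst h
    rw [← hun]
    exact (cat_hasDerivL h₁ h₂ ⟨by norm_num, le_rfl⟩).union
      (cat_hasDerivR h₁ h₂ ⟨le_rfl, by norm_num⟩)
  · refine (cat_hasDerivR h₁ h₂ ⟨h.le, ht.2⟩).mono_of_mem_nhdsWithin ?_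
    refine mem_nhdsWithin.2 ⟨Ioi (1/2), isOpen_Ioi, h, ?_⟩
    rintro s ⟨hs1, hs2⟩
    exact ⟨hs1.le, hs2.2⟩

lemma cat_derivWithin {t : ℝ} (ht : t ∈ Icc (0:ℝ) 1) :
    derivWithin (cat γ₁ γ₂) (Icc 0 1) t = catd γ₁ γ₂ t :=
  (cat_hasDeriv h₁ h₂ ht).derivWithin (udi t ht)

lemma catd_contL : ContinuousOn (catd γ₁ γ₂) (Icc 0 (1/2)) := by
  have hd₁ : ContinuousOn (derivWithin γ₁ (Icc 0 1)) (Icc 0 1) :=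
    (h₁.1.derivWithin (m := 0) udi (by norm_num)).continuousOn
  have : ContinuousOn (fun t : ℝ => (2:ℝ) • derivWithin γ₁ (Icc 0 1) (2*t)) (Icc 0 (1/2)) := by
    refine ContinuousOn.const_smul ?_ (2:ℝ)
    exact hd₁.comp (by fun_prop) (fun s hs => memL hs.1 hs.2)
  exact this.congr fun s hs => catd_eq_left hs.2

lemma catd_contR : ContinuousOn (catd γ₁ γ₂) (Icc (1/2) 1) := by
  have hd₂ : ContinuousOn (derivWithin γ₂ (Icc 0 1)) (Icc 0 1) :=
    (h₂.1.derivWithin (m := 0) udi (by norm_num)).continuousOn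
  have : ContinuousOn (fun t : ℝ => (2:ℝ) • derivWithin γ₂ (Icc 0 1) (2*t-1)) (Icc (1/2) 1) := by
    refine ContinuousOn.const_smul ?_ (2:ℝ)
    exact hd₂.comp (by fun_prop) (fun s hs => memR hs.1 hs.2)
  refine this.congr ?_
  intro s hs
  by_cases hs2 : s ≤ 1/2
  · have hs12 : s = 1/2 := le_antisymm hs2 hs.1
    subst hs12
    show catd γ₁ γ₂ (1/2) = (2:ℝ) • derivWithin γ₂ (Icc 0 1) (2*(1/2:ℝ) - 1)
    rw [catd_eq_left le_rfl, (by norm_num : (2:ℝ)*(1/2) - 1 = 0), h₂.2.2.2.2.1, smul_zero,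
      (by norm_num : (2:ℝ)*(1/2) = 1), h₁.2.2.2.2.2, smul_zero]
  · exact catd_eq_right hs2

lemma catd_cont : ContinuousOn (catd γ₁ γ₂) (Icc 0 1) := by
  intro t ht
  rcases lt_trichotomy t (1/2) with h | h | h
  · refine ((catd_contL h₁ h₂ t ⟨ht.1, h.le⟩).mono_of_mem_nhdsWithin ?_)
    refine mem_nhdsWithin.2 ⟨Iio (1/2), isOpen_Iio, h, ?_⟩
    rintro s ⟨hs1, hs2⟩
    exact ⟨hs2.1, hs1.le⟩
  · subst h
    have := ((catd_contL h₁ h₂ (1/2) ⟨by norm_num, le_rfl⟩).union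
      (catd_contR h₁ h₂ (1/2) ⟨le_rfl, by norm_num⟩))
    rwa [Icc_union_Icc_eq_Icc (by norm_num) (by norm_num)] at this
  · refine ((catd_contR h₁ h₂ t ⟨h.le, ht.2⟩).mono_of_mem_nhdsWithin ?_)
    refine mem_nhdsWithin.2 ⟨Ioi (1/2), isOpen_Ioi, h, ?_⟩
    rintro s ⟨hs1, hs2⟩
    exact ⟨hs1.le, hs2.2⟩

lemma cat_pathOK : PathOK U a c (cat γ₁ γ₂) := by
  have hdiff : DifferentiableOn ℝ (cat γ₁ γ₂) (Icc 0 1) :=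
    fun t ht => (cat_hasDeriv h₁ h₂ ht).differentiableWithinAt
  refine ⟨?_, ?_, ?_, ?_, ?_, ?_⟩
  · rw [show (1 : WithTop ℕ∞) = 0 + 1 by norm_num, contDiffOn_succ_iff_derivWithin udi]
    refine ⟨hdiff, by simp, ?_⟩
    rw [contDiffOn_zero]
    exact (catd_cont h₁ h₂).congr fun t ht => cat_derivWithin h₁ h₂ ht
  · intro t ht
    by_cases h : t ≤ 1/2
    · rw [cat_eq_left h]; exact h₁.2.1 _ (memL ht.1 h)
    · rw [cat_eq_right h]; exact h₂.2.1 _ (memR (le_of_not_ge h) ht.2)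
  · rw [cat_eq_left (by norm_num), (by norm_num : (2:ℝ)*0 = 0)]
    exact h₁.2.2.1
  · rw [cat_eq_right (by norm_num), (by norm_num : (2:ℝ)*1-1 = 1)]
    exact h₂.2.2.2.1
  · rw [cat_derivWithin h₁ h₂ (by norm_num), catd_eq_left (by norm_num),
      (by norm_num : (2:ℝ)*0 = 0), h₁.2.2.2.2.1, smul_zero]
  · rw [cat_derivWithin h₁ h₂ (by norm_num), catd_eq_right (by norm_num),
      (by norm_num : (2:ℝ)*1-1 = 1), h₂.2.2.2.2.2, smul_zero]

lemma cat_PI (hgc : ContinuousOn g U) : PI g (cat γ₁ γ₂) = PI g γ₁ + PI g γ₂ := by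
  classical
  set F₁ : ℝ → ℂ := fun s => g (γ₁ s) * derivWithin γ₁ (Icc 0 1) s with hF₁
  set F₂ : ℝ → ℂ := fun s => g (γ₂ s) * derivWithin γ₂ (Icc 0 1) s with hF₂
  set G : ℝ → ℂ := fun t => g (cat γ₁ γ₂ t) * catd γ₁ γ₂ t with hG
  have hF₁c : ContinuousOn F₁ (Icc 0 1) :=
    (hgc.comp h₁.1.continuousOn h₁.2.1).mul
      (h₁.1.derivWithin (m := 0) udi (by norm_num)).continuousOn
  have hF₂c : ContinuousOn F₂ (Icc 0 1) :=
    (hgc.comp h₂.1.continuousOn h₂.2.1).mul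
      (h₂.1.derivWithin (m := 0) udi (by norm_num)).continuousOn
  have hGL : EqOn G (fun t => (2:ℝ) • F₁ (2*t)) (Icc 0 (1/2)) := by
    intro t ht
    show g (cat γ₁ γ₂ t) * catd γ₁ γ₂ t = (2:ℝ) • F₁ (2*t)
    rw [cat_eq_left ht.2, catd_eq_left ht.2, mul_smul_comm]
  have hGR : EqOn G (fun t => (2:ℝ) • F₂ (2*t-1)) (Icc (1/2) 1) := by
    intro t ht
    show g (cat γ₁ γ₂ t) * catd γ₁ γ₂ t = (2:ℝ) • F₂ (2*t-1)
    by_cases ht2 : t ≤ 1/2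
    · have ht12 : t = 1/2 := le_antisymm ht2 ht.1
      subst ht12
      rw [cat_eq_left le_rfl, catd_eq_left le_rfl]
      show g (γ₁ (2*(1/2:ℝ))) * ((2:ℝ) • derivWithin γ₁ (Icc 0 1) (2*(1/2:ℝ)))
        = (2:ℝ) • (g (γ₂ (2*(1/2:ℝ)-1)) * derivWithin γ₂ (Icc 0 1) (2*(1/2:ℝ)-1))
      rw [(by norm_num : (2:ℝ)*(1/2) - 1 = 0), h₂.2.2.2.2.1, mul_zero, smul_zero,
        (by norm_num : (2:ℝ)*(1/2) = 1), h₁.2.2.2.2.2, smul_zero, mul_zero]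
    · rw [cat_eq_right ht2, catd_eq_right ht2, mul_smul_comm]
  have hGLc : ContinuousOn (fun t => (2:ℝ) • F₁ (2*t)) (Icc 0 (1/2)) :=
    (hF₁c.comp (f := fun s : ℝ => 2*s) (s := Icc (0:ℝ) (1/2)) (by fun_prop) (fun s hs => memL hs.1 hs.2)).const_smul (2:ℝ)
  have hGRc : ContinuousOn (fun t => (2:ℝ) • F₂ (2*t-1)) (Icc (1/2) 1) :=
    (hF₂c.comp (f := fun s : ℝ => 2*s-1) (s := Icc (1/2:ℝ) 1) (by fun_prop) (fun s hs => memR hs.1 hs.2)).const_smul (2:ℝ)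
  have int1 : IntervalIntegrable G MeasureTheory.volume 0 (1/2) := by
    refine ContinuousOn.intervalIntegrable ?_
    rw [uIcc_of_le (by norm_num : (0:ℝ) ≤ 1/2)]
    exact hGLc.congr hGL
  have int2 : IntervalIntegrable G MeasureTheory.volume (1/2) 1 := by
    refine ContinuousOn.intervalIntegrable ?_
    rw [uIcc_of_le (by norm_num : (1/2:ℝ) ≤ 1)]
    exact hGRc.congr hGR
  have step0 : PI g (cat γ₁ γ₂) = ∫ t in (0:ℝ)..1, G t := by
    refine intervalIntegral.integral_congr fun t ht => ?_
    rw [uIcc_of_le (by norm_num : (0:ℝ) ≤ 1)] at ht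
    show g (cat γ₁ γ₂ t) * derivWithin (cat γ₁ γ₂) (Icc 0 1) t = _
    rw [cat_derivWithin h₁ h₂ ht]
  have split : ∫ t in (0:ℝ)..1, G t
      = (∫ t in (0:ℝ)..(1/2), G t) + ∫ t in (1/2:ℝ)..1, G t :=
    (intervalIntegral.integral_add_adjacent_intervals int1 int2).symm
  have left : (∫ t in (0:ℝ)..(1/2), G t) = PI g γ₁ := by
    rw [intervalIntegral.integral_congr (g := fun t => (2:ℝ) • F₁ (2*t))
      (by rw [uIcc_of_le (by norm_num : (0:ℝ) ≤ 1/2)]; exact hGL),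
      intervalIntegral.integral_smul,
      intervalIntegral.integral_comp_mul_left F₁ two_ne_zero]
    norm_num [smul_smul]
    rw [show PI g γ₁ = ∫ t in (0:ℝ)..1, F₁ t from rfl]
    ring
  have right : (∫ t in (1/2:ℝ)..1, G t) = PI g γ₂ := by
    have hsub : (fun t : ℝ => (2:ℝ) • F₂ (2*t-1)) = fun t => (2:ℝ) • (fun s => F₂ (s-1)) (2*t) := rfl
    rw [intervalIntegral.integral_congr (g := fun t => (2:ℝ) • F₂ (2*t-1))
      (by rw [uIcc_of_le (by norm_num : (1/2:ℝ) ≤ 1)]; exact hGR),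
      hsub, intervalIntegral.integral_smul,
      intervalIntegral.integral_comp_mul_left (fun s => F₂ (s-1)) two_ne_zero,
      intervalIntegral.integral_comp_sub_right F₂ 1]
    norm_num [smul_smul]
    rw [show PI g γ₂ = ∫ t in (0:ℝ)..1, F₂ t from rfl]
    ring
  rw [step0, split, left, right]

end Cat

lemma sm_deriv_bound {t : ℝ} (ht : t ∈ Icc (0:ℝ) 1) : |6*t - 6*t^2| ≤ 3/2 := by
  rw [abs_le]
  constructor <;> nlinarith [ht.1, ht.2, sq_nonneg (2*t - 1)]

/-- joinability relation -/
def Rel (U : Set ℂ) (x y : ℂ) : Prop := x = y ∨ ∃ γ, PathOK U x y γ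

lemma rel_refl (x : ℂ) : Rel U x x := Or.inl rfl

lemma rel_symm {x y : ℂ} : Rel U x y → Rel U y x := by
  rintro (rfl | ⟨γ, hγ⟩)
  · exact Or.inl rfl
  · exact Or.inr ⟨rev γ, rev_pathOK hγ⟩

lemma rel_trans {x y z : ℂ} : Rel U x y → Rel U y z → Rel U x z := by
  rintro (rfl | ⟨γ₁, h₁⟩) h
  · exact h
  · rcases h with rfl | ⟨γ₂, h₂⟩
    · exact Or.inr ⟨γ₁, h₁⟩
    · exact Or.inr ⟨cat γ₁ γ₂, cat_pathOK h₁ h₂⟩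

def relSetoid (U : Set ℂ) : Setoid ℂ := ⟨Rel U, ⟨rel_refl, rel_symm, rel_trans⟩⟩

noncomputable def base (U : Set ℂ) (z : ℂ) : ℂ := (Quotient.mk (relSetoid U) z).out

lemma base_rel (U : Set ℂ) (z : ℂ) : Rel U (base U z) z :=
  Quotient.exact ((Quotient.mk (relSetoid U) z).out_eq)

lemma base_congr {x y : ℂ} (h : Rel U x y) : base U x = base U y :=
  congrArg Quotient.out (Quotient.sound (s := relSetoid U) h)

open Classical in
noncomputable def uFun (U : Set ℂ) (g : ℂ → ℂ) (z : ℂ) : ℝ :=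
  if h : ∃ γ, PathOK U (base U z) z γ then (PI g (Classical.choose h)).re else 0

lemma exists_path_base {z : ℂ} (hz : z ∈ U) : ∃ γ, PathOK U (base U z) z γ := by
  rcases base_rel U z with h | h
  · rw [h]; exact ⟨_, const_pathOK hz⟩
  · exact h

end RePrim



open RePrim in
/-- Single-valuedness of the width function: if all periods of the holomorphic
differential `g·dz` over C¹ loops in the open set `U` are purely imaginary, then
there is a globally defined real-valued function `u` whose real Fréchet
derivative at every `z ∈ U` is `w ↦ Re (g z * w)`. -/
theorem exists_global_re_primitive
    (U : Set ℂ) (hU : IsOpen U) (g : ℂ → ℂ)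
    (hg : ∀ z ∈ U, DifferentiableAt ℂ g z)
    (hper : ∀ γ : ℝ → ℂ, ContDiffOn ℝ 1 γ (Icc 0 1) →
      (∀ t ∈ Icc (0 : ℝ) 1, γ t ∈ U) → γ 0 = γ 1 →
      (∫ t in (0 : ℝ)..1, g (γ t) * derivWithin γ (Icc 0 1) t).re = 0) :
    ∃ u : ℂ → ℝ, ∀ z ∈ U,
      HasFDerivAt u
        (Complex.reCLM.comp ((g z • ContinuousLinearMap.id ℂ ℂ).restrictScalars ℝ)) z := by
  classical
  have hgc : ContinuousOn g U := fun z hz => (hg z hz).continuousAt.continuousWithinAt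
  -- path independence of the real part
  have key : ∀ {x y : ℂ} {γ₁ γ₂ : ℝ → ℂ}, PathOK U x y γ₁ → PathOK U x y γ₂ →
      (PI g γ₁).re = (PI g γ₂).re := by
    intro x y γ₁ γ₂ h₁ h₂
    have h₂' := rev_pathOK h₂
    have hloop := cat_pathOK h₁ h₂'
    have hPI : PI g (cat γ₁ (rev γ₂)) = PI g γ₁ - PI g γ₂ := by
      rw [cat_PI h₁ h₂' hgc, rev_PI h₂.1]
      ring
    have h0 : (PI g (cat γ₁ (rev γ₂))).re = 0 :=
      hper _ hloop.1 hloop.2.1 (hloop.2.2.1.trans hloop.2.2.2.1.symm)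
    rw [hPI, Complex.sub_re] at h0
    linarith
  -- the value of uFun along any admissible path from the basepoint
  have uval : ∀ z ∈ U, ∀ γ : ℝ → ℂ, PathOK U (base U z) z γ → uFun U g z = (PI g γ).re := by
    intro z hz γ hγ
    have hex : ∃ γ', PathOK U (base U z) z γ' := ⟨γ, hγ⟩
    rw [uFun, dif_pos hex]
    exact key (Classical.choose_spec hex) hγ
  refine ⟨uFun U g, ?_⟩
  intro z₀ hz₀
  obtain ⟨ε, hε, hball⟩ := Metric.isOpen_iff.1 hU z₀ hz₀
  -- the segment path from z₀ to a nearby point is admissible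
  have hsegOK : ∀ z ∈ Metric.ball z₀ ε, PathOK U z₀ z (seg z₀ z) := by
    intro z hzb
    refine seg_pathOK (fun t ht => hball ?_)
    have hmem := sm_mem ht
    rw [Metric.mem_ball, dist_eq_norm]
    have : seg z₀ z t - z₀ = (sm t : ℂ) * (z - z₀) := by rw [seg]; ring
    rw [this]
    rw [norm_mul, Complex.norm_real]
    calc |sm t| * ‖z - z₀‖ ≤ 1 * ‖z - z₀‖ := by
          apply mul_le_mul_of_nonneg_right _ (norm_nonneg _)
          rw [abs_le]; exact ⟨by linarith [hmem.1], hmem.2⟩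
      _ = ‖z - z₀‖ := one_mul _
      _ < ε := by rw [← dist_eq_norm]; exact hzb
  -- difference formula for nearby points
  obtain ⟨γ₀, hγ₀⟩ := exists_path_base hz₀
  have hdiff : ∀ z ∈ Metric.ball z₀ ε, uFun U g z = uFun U g z₀ + (PI g (seg z₀ z)).re := by
    intro z hzb
    have hseg := hsegOK z hzb
    have hbase : base U z = base U z₀ := (base_congr (Or.inr ⟨seg z₀ z, hseg⟩)).symm
    have hcat : PathOK U (base U z) z (cat γ₀ (seg z₀ z)) := by
      rw [hbase]; exact cat_pathOK hγ₀ hseg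
    have hzU : z ∈ U := hball hzb
    rw [uval z hzU _ hcat, cat_PI hγ₀ hseg hgc, uval z₀ hz₀ γ₀ hγ₀, Complex.add_re]
  -- now the derivative
  rw [hasFDerivAt_iff_isLittleO_nhds_zero, Asymptotics.isLittleO_iff]
  intro c hc
  obtain ⟨δ, hδ, hgδ⟩ := Metric.continuousAt_iff.1 (hg z₀ hz₀).continuousAt (c/2) (by linarith)
  rw [Metric.eventually_nhds_iff]
  refine ⟨min δ ε, lt_min hδ hε, ?_⟩
  intro h hh
  rw [dist_zero_right] at hh
  have hhδ : ‖h‖ < δ := lt_of_lt_of_le hh (min_le_left _ _)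
  have hhε : ‖h‖ < ε := lt_of_lt_of_le hh (min_le_right _ _)
  have hzb : z₀ + h ∈ Metric.ball z₀ ε := by
    rw [Metric.mem_ball, dist_eq_norm, add_sub_cancel_left]
    exact hhε
  have happ : (Complex.reCLM.comp ((g z₀ • ContinuousLinearMap.id ℂ ℂ).restrictScalars ℝ)) h
      = (g z₀ * h).re := by simp
  have hsub : z₀ + h - z₀ = h := add_sub_cancel_left z₀ h
  -- integral representation of the difference
  have hrep : uFun U g (z₀ + h) - uFun U g z₀
      = (∫ t in (0:ℝ)..1, g (seg z₀ (z₀+h) t) * (((6*t - 6*t^2 : ℝ):ℂ) * h)).re := by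
    rw [hdiff _ hzb, seg_PI, hsub]
    ring
  -- the constant integral
  have hint1 : (∫ t in (0:ℝ)..1, (6*t - 6*t^2 : ℝ)) = 1 := by
    have h1 : IntervalIntegrable (fun t : ℝ => 6*t) MeasureTheory.volume 0 1 := by
      apply Continuous.intervalIntegrable; fun_prop
    have h2 : IntervalIntegrable (fun t : ℝ => 6*t^2) MeasureTheory.volume 0 1 := by
      apply Continuous.intervalIntegrable; fun_prop
    rw [intervalIntegral.integral_sub h1 h2, intervalIntegral.integral_const_mul,
      intervalIntegral.integral_const_mul, integral_id, integral_pow]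
    norm_num
  have hconst : g z₀ * h = ∫ t in (0:ℝ)..1, g z₀ * (((6*t - 6*t^2 : ℝ):ℂ) * h) := by
    have : (fun t : ℝ => g z₀ * (((6*t - 6*t^2 : ℝ):ℂ) * h))
        = fun t : ℝ => ((6*t - 6*t^2 : ℝ):ℂ) * (g z₀ * h) := by
      funext t; ring
    rw [this, intervalIntegral.integral_mul_const, intervalIntegral.integral_ofReal, hint1]
    norm_num
  -- integrability
  have hsegc : ContinuousOn (fun t => g (seg z₀ (z₀+h) t)) (Icc (0:ℝ) 1) := by
    refine hgc.comp ?_ ?_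
    · exact (ContDiff.contDiffOn (n := 1)
        (contDiff_const.add ((Complex.ofRealCLM.contDiff.comp sm_contDiff).mul
          contDiff_const))).continuousOn
    · exact fun t ht => (hsegOK _ hzb).2.1 t ht
  have hcont2 : Continuous (fun t : ℝ => ((6*t - 6*t^2 : ℝ):ℂ) * h) := by fun_prop
  have hi1 : IntervalIntegrable (fun t : ℝ => g (seg z₀ (z₀+h) t) * (((6*t - 6*t^2 : ℝ):ℂ) * h))
      MeasureTheory.volume 0 1 := by
    refine ContinuousOn.intervalIntegrable ?_
    rw [uIcc_of_le (by norm_num : (0:ℝ) ≤ 1)]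
    exact hsegc.mul hcont2.continuousOn
  have hi2 : IntervalIntegrable (fun t : ℝ => g z₀ * (((6*t - 6*t^2 : ℝ):ℂ) * h))
      MeasureTheory.volume 0 1 :=
    (continuous_const.mul hcont2).intervalIntegrable _ _
  -- key estimate
  have hdiff2 : uFun U g (z₀ + h) - uFun U g z₀ - (g z₀ * h).re
      = (∫ t in (0:ℝ)..1, (g (seg z₀ (z₀+h) t) - g z₀) * (((6*t - 6*t^2 : ℝ):ℂ) * h)).re := by
    rw [hrep]
    rw [show (g z₀ * h).re = (∫ t in (0:ℝ)..1, g z₀ * (((6*t - 6*t^2 : ℝ):ℂ) * h)).re by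
      rw [← hconst]]
    rw [← Complex.sub_re, ← intervalIntegral.integral_sub hi1 hi2]
    congr 1
    refine intervalIntegral.integral_congr fun t ht => ?_
    ring
  have hbound : ∀ t ∈ Set.uIoc (0:ℝ) 1,
      ‖(g (seg z₀ (z₀+h) t) - g z₀) * (((6*t - 6*t^2 : ℝ):ℂ) * h)‖ ≤ (c/2) * (3/2) * ‖h‖ := by
    intro t ht
    have ht' : t ∈ Icc (0:ℝ) 1 := Ioc_subset_Icc_self (by rwa [uIoc_of_le (by norm_num)] at ht)
    have hsm := sm_mem ht'
    have hdist : dist (seg z₀ (z₀+h) t) z₀ < δ := by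
      rw [dist_eq_norm]
      have : seg z₀ (z₀+h) t - z₀ = (sm t : ℂ) * h := by rw [seg, hsub]; ring
      rw [this, norm_mul, Complex.norm_real]
      calc |sm t| * ‖h‖ ≤ 1 * ‖h‖ := by
            apply mul_le_mul_of_nonneg_right _ (norm_nonneg _)
            rw [abs_le]; exact ⟨by linarith [hsm.1], hsm.2⟩
        _ = ‖h‖ := one_mul _
        _ < δ := hhδ
    have hg1 : ‖g (seg z₀ (z₀+h) t) - g z₀‖ ≤ c/2 := by
      have := hgδ hdist
      rw [dist_eq_norm] at this
      linarith
    rw [norm_mul, norm_mul, Complex.norm_real]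
    calc ‖g (seg z₀ (z₀+h) t) - g z₀‖ * (|6*t - 6*t^2| * ‖h‖)
        ≤ (c/2) * ((3/2) * ‖h‖) := by
          apply mul_le_mul hg1 _ (by positivity) (by linarith)
          exact mul_le_mul_of_nonneg_right (sm_deriv_bound ht') (norm_nonneg _)
      _ = (c/2) * (3/2) * ‖h‖ := by ring
  have hnorm : ‖(∫ t in (0:ℝ)..1, (g (seg z₀ (z₀+h) t) - g z₀) * (((6*t - 6*t^2 : ℝ):ℂ) * h))‖
      ≤ (c/2) * (3/2) * ‖h‖ := by
    have := intervalIntegral.norm_integral_le_of_norm_le_const hbound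
    simpa using this
  rw [happ]
  calc ‖uFun U g (z₀ + h) - uFun U g z₀ - (g z₀ * h).re‖
      = |uFun U g (z₀ + h) - uFun U g z₀ - (g z₀ * h).re| := rfl
    _ ≤ ‖(∫ t in (0:ℝ)..1, (g (seg z₀ (z₀+h) t) - g z₀) * (((6*t - 6*t^2 : ℝ):ℂ) * h))‖ := by
        rw [hdiff2]
        exact Complex.abs_re_le_norm _
    _ ≤ (c/2) * (3/2) * ‖h‖ := hnorm
    _ ≤ c * ‖h‖ := by nlinarith [norm_nonneg h, hc.le]
end
end
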